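/- Let α, β, μ ∈ ℝ. Let π₁ be the skew-symmetric matrix-valued map on ℝ³ with entries π₁_{SI} = 0, π₁_{SR} = −β·S·I + μ·I, π₁_{IR} = β·S·I − (α+μ)·I, and π₂ the skew-symmetric matrix-valued map with entries π₂_{SI} = −β·S·I + μ·I, π₂_{SR} = β·S·I − μ·I, π₂_{IR} = −β·S·I + μ·I. Then the sum π = π₁ + π₂, with entries π_{SI} = −β·S·I + μ·I, π_{SR} = 0, π_{IR} = −α·I, satisfies the Jacobi identity: for all x ∈ ℝ³ and all indices i,j,k, ∑_l (π_{l i}(x)·∂_l π_{j k}(x) + π_{l j}(x)·∂_l π_{k i}(x) + π_{l k}(x)·∂_l π_{i j}(x)) = 0. Hence the two Poisson structures of the endemic SIRS model are compatible. -/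

import Mathlib

/-- A pointwise skew-symmetric matrix-valued map `P : ℝⁿ → Matrix(n,n,ℝ)` satisfies the
Jacobi identity if for all `x` and indices `i j k`,
`∑ l, (P_{l i}(x)·∂_l P_{j k}(x) + P_{l j}(x)·∂_l P_{k i}(x) + P_{l k}(x)·∂_l P_{i j}(x)) = 0`. -/
def JacobiIdentity {n : Type*} [Fintype n] [DecidableEq n]
    (P : (n → ℝ) → Matrix n n ℝ) : Prop :=
  ∀ x : n → ℝ, ∀ i j k : n,
    ∑ l : n,
      (P x l i * fderiv ℝ (fun y => P y j k) x (Pi.single l 1) +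
        P x l j * fderiv ℝ (fun y => P y k i) x (Pi.single l 1) +
        P x l k * fderiv ℝ (fun y => P y i j) x (Pi.single l 1)) = 0

/-- The first Poisson structure of the endemic SIRS model, on coordinates
`(S,I,R) = (x 0, x 1, x 2)`: `π₁_{SI} = 0`, `π₁_{SR} = −β·S·I + μ·I`,
`π₁_{IR} = β·S·I − (α+μ)·I`. -/
noncomputable def sirsPoisson1 (α β μ : ℝ) (x : Fin 3 → ℝ) : Matrix (Fin 3) (Fin 3) ℝ :=
  Matrix.of
    ![![0, 0, -β * x 0 * x 1 + μ * x 1],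
      ![0, 0, β * x 0 * x 1 - (α + μ) * x 1],
      ![-(-β * x 0 * x 1 + μ * x 1), -(β * x 0 * x 1 - (α + μ) * x 1), 0]]

/-- The second Poisson structure of the endemic SIRS model:
`π₂_{SI} = −β·S·I + μ·I`, `π₂_{SR} = β·S·I − μ·I`, `π₂_{IR} = −β·S·I + μ·I`. -/
noncomputable def sirsPoisson2 (β μ : ℝ) (x : Fin 3 → ℝ) : Matrix (Fin 3) (Fin 3) ℝ :=
  Matrix.of
    ![![0, -β * x 0 * x 1 + μ * x 1, β * x 0 * x 1 - μ * x 1],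
      ![-(-β * x 0 * x 1 + μ * x 1), 0, -β * x 0 * x 1 + μ * x 1],
      ![-(β * x 0 * x 1 - μ * x 1), -(-β * x 0 * x 1 + μ * x 1), 0]]


private lemma sirs_key (a b : ℝ) (x : Fin 3 → ℝ) (l : Fin 3) :
    fderiv ℝ (fun y : Fin 3 → ℝ => a * y 0 * y 1 + b * y 1) x (Pi.single l 1) =
      a * ((Pi.single l 1 : Fin 3 → ℝ) 0 * x 1 + x 0 * (Pi.single l 1 : Fin 3 → ℝ) 1) +
        b * (Pi.single l 1 : Fin 3 → ℝ) 1 := by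
  have h0 : HasFDerivAt (fun y : Fin 3 → ℝ => y 0)
      (ContinuousLinearMap.proj 0 : (Fin 3 → ℝ) →L[ℝ] ℝ) x := by
    exact (ContinuousLinearMap.proj (R := ℝ) (φ := fun _ : Fin 3 => ℝ) 0).hasFDerivAt
  have h1 : HasFDerivAt (fun y : Fin 3 → ℝ => y 1)
      (ContinuousLinearMap.proj 1 : (Fin 3 → ℝ) →L[ℝ] ℝ) x := by
    exact (ContinuousLinearMap.proj (R := ℝ) (φ := fun _ : Fin 3 => ℝ) 1).hasFDerivAt
  have h : HasFDerivAt (fun y : Fin 3 → ℝ => a * y 0 * y 1 + b * y 1) _ x :=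
    (((h0.const_mul a).mul h1).add (h1.const_mul b))
  rw [h.fderiv]
  simp
  ring

set_option maxHeartbeats 1000000 in
/-- The sum of the two Poisson structures of the endemic SIRS model, with entries
`π_{SI} = −β·S·I + μ·I`, `π_{SR} = 0`, `π_{IR} = −α·I`, satisfies the Jacobi identity,
hence the two Poisson structures are compatible. -/
theorem endemicSIRS_poisson_structures_compatible (α β μ : ℝ) :
    (∀ x : Fin 3 → ℝ,
      (sirsPoisson1 α β μ x + sirsPoisson2 β μ x) 0 1 = -β * x 0 * x 1 + μ * x 1 ∧
      (sirsPoisson1 α β μ x + sirsPoisson2 β μ x) 0 2 = 0 ∧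
      (sirsPoisson1 α β μ x + sirsPoisson2 β μ x) 1 2 = -α * x 1) ∧
    JacobiIdentity (fun x => sirsPoisson1 α β μ x + sirsPoisson2 β μ x) := by
  constructor
  · intro x
    refine ⟨?_, ?_, ?_⟩ <;> simp [sirsPoisson1, sirsPoisson2] <;> ring
  · intro x i j k
    have e : ∀ j k : Fin 3,
        (fun y : Fin 3 → ℝ => (sirsPoisson1 α β μ y + sirsPoisson2 β μ y) j k) =
        fun y : Fin 3 → ℝ =>
          (![![0, -β, 0], ![β, 0, 0], ![0, 0, 0]] : Fin 3 → Fin 3 → ℝ) j k * y 0 * y 1 +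
          (![![0, μ, 0], ![-μ, 0, -α], ![0, α, 0]] : Fin 3 → Fin 3 → ℝ) j k * y 1 := by
      intro j k
      funext y
      fin_cases j <;> fin_cases k <;> simp [sirsPoisson1, sirsPoisson2, Matrix.vecHead, Matrix.vecTail] <;> ring
    have ex : ∀ (j k : Fin 3) (y : Fin 3 → ℝ),
        (sirsPoisson1 α β μ y + sirsPoisson2 β μ y) j k =
        (![![0, -β, 0], ![β, 0, 0], ![0, 0, 0]] : Fin 3 → Fin 3 → ℝ) j k * y 0 * y 1 +
        (![![0, μ, 0], ![-μ, 0, -α], ![0, α, 0]] : Fin 3 → Fin 3 → ℝ) j k * y 1 :=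
      fun j k y => congrFun (e j k) y
    simp only [e, sirs_key, ex, Fin.sum_univ_three]
    fin_cases i <;> fin_cases j <;> fin_cases k <;>
      · simp [Pi.single_apply, Fin.mk.injEq, Matrix.cons_val_zero, Matrix.cons_val_one,
          Matrix.head_cons, Matrix.cons_val_two, Matrix.tail_cons, Matrix.vecHead,
          Matrix.vecTail, Function.comp]
        try ring
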